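/- Let A be an associative algebra over a field of characteristic zero and n an even positive integer. Then the n-bracket [X_1,...,X_n] = ∑_{σ∈S_n} sgn(σ) X_{σ(1)}⋯X_{σ(n)} satisfies the generalized Jacobi identity: ∑_{σ∈S_{2n−1}} sgn(σ) [[X_{σ(1)},...,X_{σ(n)}], X_{σ(n+1)},...,X_{σ(2n−1)}] = 0. -/

import Mathlib

/-- The fully antisymmetrized `n`-bracket in an associative algebra. -/
def mbracket {A : Type*} [Ring A] {n : ℕ} (X : Fin n → A) : A :=
  ∑ σ : Equiv.Perm (Fin n), (Equiv.Perm.sign σ : ℤ) • (List.ofFn fun i => X (σ i)).prod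

open Equiv Equiv.Perm Finset List

namespace MJ

/-- Three-way split of `List.ofFn`. -/
theorem ofFn_split3 {α : Type*} {p q r s : ℕ} (hs : p + q + r = s) (f : Fin s → α) :
    List.ofFn f =
      ((List.ofFn fun t : Fin p => f ⟨t.1, by have := t.isLt; omega⟩) ++
        (List.ofFn fun t : Fin q => f ⟨p + t.1, by have := t.isLt; omega⟩)) ++
        (List.ofFn fun t : Fin r => f ⟨p + q + t.1, by have := t.isLt; omega⟩) := by
  apply List.ext_getElem
  · simp; omega
  · intro i h₁ h₂
    simp only [List.getElem_append, List.length_ofFn, List.getElem_ofFn, List.length_append]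
    split_ifs with h3 h4 <;>
      (first
        | rfl
        | (congr 1; simp only [Fin.mk.injEq]; simp only [List.length_ofFn, List.length_append] at h3 h4 ⊢ <;> omega)
        | (congr 1; simp only [Fin.mk.injEq]; omega))

theorem cons_mk_succ {M : Type*} {m : ℕ} (b : M) (Y : Fin m → M) (t : ℕ) (h : t + 1 < m + 1) :
    (Fin.cons b Y : Fin (m + 1) → M) ⟨t + 1, h⟩ = Y ⟨t, by omega⟩ := by
  have : (⟨t + 1, h⟩ : Fin (m + 1)) = Fin.succ ⟨t, by omega⟩ := rfl
  rw [this, Fin.cons_succ]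

theorem cons_mk_zero {M : Type*} {m : ℕ} (b : M) (Y : Fin m → M) (h : 0 < m + 1) :
    (Fin.cons b Y : Fin (m + 1) → M) ⟨0, h⟩ = b := rfl

end MJ

namespace MJ2
open MJ

theorem prod_cons_cycleRange {M : Type*} [Monoid M] {m : ℕ} (b : M) (Y : Fin m → M)
    (k : Fin (m + 1)) :
    (List.ofFn fun i : Fin (m + 1) => (Fin.cons b Y : Fin (m+1) → M) (Fin.cycleRange k i)).prod =
      (List.ofFn fun t : Fin k.1 =>
          Y ⟨t.1, by have := t.isLt; have := k.isLt; omega⟩).prod * b *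
        (List.ofFn fun t : Fin (m - k.1) => Y ⟨k.1 + t.1, by have := t.isLt; omega⟩).prod := by
  have hk := k.isLt
  rw [ofFn_split3 (p := k.1) (q := 1) (r := m - k.1) (by omega)
    (fun i : Fin (m+1) => (Fin.cons b Y : Fin (m+1) → M) (Fin.cycleRange k i))]
  rw [List.prod_append, List.prod_append]
  congr 1
  · congr 1
    · -- first block: entries Y t
      apply congrArg List.prod
      apply congrArg List.ofFn
      funext t
      have ht := t.isLt
      have hlt : (⟨t.1, by omega⟩ : Fin (m+1)) < k := by
        rw [Fin.lt_def]; exact ht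
      rw [show Fin.cycleRange k ⟨t.1, by omega⟩ = ⟨t.1 + 1, by omega⟩ from
        Fin.ext (Fin.coe_cycleRange_of_lt hlt), cons_mk_succ]
    · -- middle: [b]
      simp only [List.ofFn_succ, List.ofFn_zero]
      rw [show (⟨k.1 + (0 : Fin 1).1, by omega⟩ : Fin (m+1)) = k from Fin.ext (by simp)]
      rw [Fin.cycleRange_self]
      simp [List.prod_cons]
  · -- last block
    apply congrArg List.prod
    apply congrArg List.ofFn
    funext t
    have ht := t.isLt
    have hgt : k < (⟨k.1 + 1 + t.1, by omega⟩ : Fin (m+1)) := by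
      rw [Fin.lt_def]; simp; omega
    rw [Fin.cycleRange_of_gt hgt]
    rw [show (⟨k.1 + 1 + t.1, by omega⟩ : Fin (m+1)) = ⟨(k.1 + t.1) + 1, by omega⟩ from
      Fin.ext (show k.1 + 1 + t.1 = k.1 + t.1 + 1 by omega), cons_mk_succ]

end MJ2

namespace MJ3
open MJ MJ2

variable {m : ℕ}

/-- Lift a permutation of `Fin m` to `Fin (m+1)` fixing `0`. -/
def liftPerm (μ : Perm (Fin m)) : Perm (Fin (m + 1)) := Equiv.Perm.decomposeFin.symm (0, μ)

theorem cons_liftPerm {M : Type*} (b : M) (Y : Fin m → M) (μ : Perm (Fin m)) (x : Fin (m + 1)) :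
    (Fin.cons b Y : Fin (m+1) → M) (liftPerm μ x) = (Fin.cons b (Y ∘ μ) : Fin (m+1) → M) x := by
  induction x using Fin.cases with
  | zero => simp [liftPerm]
  | succ j => simp [liftPerm]

@[simp] theorem sign_liftPerm (μ : Perm (Fin m)) : sign (liftPerm μ) = sign μ := by
  simp [liftPerm]

theorem liftPerm_injective : Function.Injective (liftPerm (m := m)) := by
  intro a b h
  have := Equiv.Perm.decomposeFin.symm.injective (h : _ = _)
  simpa [Prod.ext_iff] using this

/-- Index of outer permutations by (position of block, perm of the rest). -/
def outerIndex : Fin (m + 1) × Perm (Fin m) → Perm (Fin (m + 1)) :=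
  fun km => liftPerm km.2 * Fin.cycleRange km.1

theorem outerIndex_apply_fst (km : Fin (m + 1) × Perm (Fin m)) :
    outerIndex km km.1 = 0 := by
  simp [outerIndex, Perm.mul_apply, liftPerm]

theorem outerIndex_bijective : Function.Bijective (outerIndex (m := m)) := by
  rw [Fintype.bijective_iff_injective_and_card]
  constructor
  · rintro ⟨k₁, μ₁⟩ ⟨k₂, μ₂⟩ h
    have h1 := outerIndex_apply_fst (k₁, μ₁)
    have h2 := outerIndex_apply_fst (k₂, μ₂)
    rw [h] at h1
    have hk : k₁ = k₂ := (outerIndex (k₂, μ₂)).injective (h1.trans h2.symm)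
    subst hk
    have : liftPerm μ₁ = liftPerm μ₂ := mul_right_cancel h
    rw [liftPerm_injective this]
  · simp [Fintype.card_perm, Fintype.card_fin, Nat.factorial_succ]

theorem sign_outerIndex (k : Fin (m + 1)) (μ : Perm (Fin m)) :
    (sign (outerIndex (k, μ)) : ℤ) = (-1) ^ k.1 * (sign μ : ℤ) := by
  simp [outerIndex, mul_comm]

end MJ3

namespace MJ4
open MJ MJ2 MJ3

variable {m : ℕ}

/-- block permutation: ρ on the first m+1 coordinates, μ on the last m. -/
def qperm (ρ : Perm (Fin (m + 1))) (μ : Perm (Fin m)) : Perm (Fin (2 * m + 1)) :=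
  (finSumFinEquiv.trans (finCongr (by omega : (m + 1) + m = 2 * m + 1))).permCongr
    (Equiv.sumCongr ρ μ)

theorem qperm_apply_left (ρ : Perm (Fin (m + 1))) (μ : Perm (Fin m)) (j : Fin (m + 1)) :
    qperm ρ μ ⟨j.1, by have := j.isLt; omega⟩ = ⟨(ρ j).1, by have := (ρ j).isLt; omega⟩ := by
  have h1 : (finSumFinEquiv.trans (finCongr (by omega : (m + 1) + m = 2 * m + 1)))
      (Sum.inl j) = ⟨j.1, by have := j.isLt; omega⟩ := by
    simp [finSumFinEquiv_apply_left]
    exact Fin.ext rfl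
  rw [qperm, Equiv.permCongr_apply, ← h1, Equiv.symm_apply_apply]
  simp [finSumFinEquiv_apply_left]
  exact Fin.ext rfl

theorem qperm_apply_right (ρ : Perm (Fin (m + 1))) (μ : Perm (Fin m)) (j : Fin m) :
    qperm ρ μ ⟨m + 1 + j.1, by have := j.isLt; linarith⟩ =
      ⟨m + 1 + (μ j).1, by have := (μ j).isLt; omega⟩ := by
  have h1 : (finSumFinEquiv.trans (finCongr (by omega : (m + 1) + m = 2 * m + 1)))
      (Sum.inr j) = ⟨m + 1 + j.1, by have := j.isLt; linarith⟩ := by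
    simp [finSumFinEquiv_apply_right]
    exact Fin.ext rfl
  rw [qperm, Equiv.permCongr_apply, ← h1, Equiv.symm_apply_apply]
  simp [finSumFinEquiv_apply_right]
  exact Fin.ext rfl

theorem sign_qperm (ρ : Perm (Fin (m + 1))) (μ : Perm (Fin m)) :
    sign (qperm ρ μ) = sign ρ * sign μ := by
  simp [qperm, Equiv.Perm.sign_permCongr, Equiv.Perm.sign_sumCongr]

end MJ4

namespace MJ5
open MJ MJ2 MJ3 MJ4

variable {m : ℕ}

theorem finRotate_pow_apply (s j : ℕ) (i : Fin (s + 1)) :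
    ((finRotate (s + 1)) ^ j) i = ⟨(i.1 + j) % (s + 1), Nat.mod_lt _ s.succ_pos⟩ := by
  induction j with
  | zero =>
    simp only [pow_zero, Equiv.Perm.one_apply]
    exact Fin.ext (Nat.mod_eq_of_lt i.isLt).symm
  | succ j ih =>
    rw [pow_succ', Perm.mul_apply, ih, finRotate_succ_apply]
    apply Fin.ext
    rw [Fin.val_add, Fin.val_one']
    show ((i.1 + j) % (s + 1) + 1 % (s + 1)) % (s + 1) = (i.1 + (j + 1)) % (s + 1)
    conv_rhs => rw [← Nat.add_assoc, Nat.add_mod]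

end MJ5

namespace MJ6
open MJ MJ2 MJ3 MJ4 MJ5

variable {m : ℕ}

/-- rotation bringing the block, initially at outer position k, to the front. -/
def cperm (k : Fin (m + 1)) : Perm (Fin (2 * m + 1)) :=
  (finSumFinEquiv.trans (finCongr
      (by have := k.isLt; omega : (m + k.1 + 1) + (m - k.1) = 2 * m + 1))).permCongr
    (Equiv.sumCongr ((finRotate (m + k.1 + 1)) ^ (m + 1)) (1 : Perm (Fin (m - k.1))))

theorem cperm_apply_low (k : Fin (m + 1)) (t : ℕ) (ht : t < k.1) :
    cperm k ⟨t, by have := k.isLt; omega⟩ = ⟨m + 1 + t, by have := k.isLt; omega⟩ := by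
  have hk := k.isLt
  have h1 : (finSumFinEquiv.trans (finCongr
      (by omega : (m + k.1 + 1) + (m - k.1) = 2 * m + 1)))
      (Sum.inl ⟨t, by omega⟩) = ⟨t, by omega⟩ := by
    apply Fin.ext
    simp [Equiv.trans_apply, finSumFinEquiv_apply_left, finCongr_apply]
  rw [cperm, Equiv.permCongr_apply, ← h1, Equiv.symm_apply_apply,
    Equiv.sumCongr_apply, Sum.map_inl, finRotate_pow_apply]
  simp [finSumFinEquiv_apply_left, Fin.ext_iff]
  rw [Nat.mod_eq_of_lt (by omega)]
  omega

theorem cperm_apply_mid (k : Fin (m + 1)) (j : Fin (m + 1)) :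
    cperm k ⟨k.1 + j.1, by have := k.isLt; have := j.isLt; omega⟩ =
      ⟨j.1, by have := j.isLt; omega⟩ := by
  have hk := k.isLt
  have hj := j.isLt
  have h1 : (finSumFinEquiv.trans (finCongr
      (by omega : (m + k.1 + 1) + (m - k.1) = 2 * m + 1)))
      (Sum.inl ⟨k.1 + j.1, by omega⟩) = ⟨k.1 + j.1, by omega⟩ := by
    apply Fin.ext
    simp [Equiv.trans_apply, finSumFinEquiv_apply_left, finCongr_apply]
  rw [cperm, Equiv.permCongr_apply, ← h1, Equiv.symm_apply_apply,
    Equiv.sumCongr_apply, Sum.map_inl, finRotate_pow_apply]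
  simp [finSumFinEquiv_apply_left, Fin.ext_iff]
  rw [show (k.1 + j.1) + (m + 1) = (m + k.1 + 1) + j.1 by omega, Nat.add_mod_left,
    Nat.mod_eq_of_lt (by omega)]

theorem cperm_apply_high (k : Fin (m + 1)) (t : ℕ) (h1 : m + 1 + k.1 ≤ t) (h2 : t < 2 * m + 1) :
    cperm k ⟨t, h2⟩ = ⟨t, h2⟩ := by
  have hk := k.isLt
  have h3 : (finSumFinEquiv.trans (finCongr
      (by omega : (m + k.1 + 1) + (m - k.1) = 2 * m + 1)))
      (Sum.inr ⟨t - (m + k.1 + 1), by omega⟩) = ⟨t, h2⟩ := by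
    apply Fin.ext
    simp [Equiv.trans_apply, finSumFinEquiv_apply_right, finCongr_apply]
    omega
  rw [cperm, Equiv.permCongr_apply, ← h3, Equiv.symm_apply_apply,
    Equiv.sumCongr_apply, Sum.map_inr, Equiv.Perm.one_apply, h3]

theorem sign_cperm (hm : Even (m + 1)) (k : Fin (m + 1)) : sign (cperm k) = 1 := by
  rw [cperm]
  rw [Equiv.Perm.sign_permCongr, Equiv.Perm.sign_sumCongr, map_pow, sign_finRotate]
  simp only [Equiv.Perm.sign_one, mul_one]
  rw [← pow_mul, pow_mul']
  rw [hm.neg_one_pow]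
  exact one_pow _

end MJ6

namespace MJ7
open MJ MJ2 MJ3 MJ4 MJ5 MJ6

variable {A : Type*} [Ring A] {m : ℕ}

theorem word_recombine (X : Fin (2 * m + 1) → A) (σ : Perm (Fin (2 * m + 1)))
    (k : Fin (m + 1)) (μ : Perm (Fin m)) (ρ : Perm (Fin (m + 1)))
    (h : m + 1 ≤ 2 * m + 1) :
    (List.ofFn fun t : Fin k.1 =>
        X (σ ⟨m + 1 + (μ ⟨t.1, by have := t.isLt; have := k.isLt; omega⟩).1,
            by have := (μ ⟨t.1, by have := t.isLt; have := k.isLt; omega⟩).isLt; omega⟩)).prod *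
      (List.ofFn fun i : Fin (m + 1) => X (σ (Fin.castLE h (ρ i)))).prod *
      (List.ofFn fun t : Fin (m - k.1) =>
        X (σ ⟨m + 1 + (μ ⟨k.1 + t.1, by have := t.isLt; omega⟩).1,
            by have := (μ ⟨k.1 + t.1, by have := t.isLt; omega⟩).isLt; omega⟩)).prod
    = (List.ofFn fun t : Fin (2 * m + 1) => X ((σ * qperm ρ μ * cperm k) t)).prod := by
  have hk := k.isLt
  rw [ofFn_split3 (p := k.1) (q := m + 1) (r := m - k.1) (by omega)
      (fun t : Fin (2 * m + 1) => X ((σ * qperm ρ μ * cperm k) t))]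
  rw [List.prod_append, List.prod_append]
  congr 1
  · congr 1
    · -- first block
      apply congrArg List.prod
      apply congrArg List.ofFn
      funext t
      have ht := t.isLt
      simp only [Equiv.Perm.mul_apply]
      rw [cperm_apply_low k t.1 ht, qperm_apply_right ρ μ ⟨t.1, by omega⟩]
    · -- middle block
      apply congrArg List.prod
      apply congrArg List.ofFn
      funext j
      simp only [Equiv.Perm.mul_apply]
      rw [cperm_apply_mid k j, qperm_apply_left ρ μ j]
      rfl
  · -- last block
    apply congrArg List.prod
    apply congrArg List.ofFn
    funext t
    have ht := t.isLt
    simp only [Equiv.Perm.mul_apply]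
    rw [show (⟨k.1 + (m + 1) + t.1, by omega⟩ : Fin (2 * m + 1)) =
        ⟨m + 1 + k.1 + t.1, by omega⟩ from Fin.ext (show k.1 + (m + 1) + t.1 = m + 1 + k.1 + t.1 by omega)]
    rw [cperm_apply_high k (m + 1 + k.1 + t.1) (by omega) (by omega)]
    rw [show (⟨m + 1 + k.1 + t.1, by omega⟩ : Fin (2 * m + 1)) =
        ⟨m + 1 + (k.1 + t.1), by omega⟩ from Fin.ext (show m + 1 + k.1 + t.1 = m + 1 + (k.1 + t.1) by omega)]
    rw [qperm_apply_right ρ μ ⟨k.1 + t.1, by omega⟩]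

end MJ7

namespace MJ8
open MJ MJ2 MJ3 MJ4 MJ5 MJ6 MJ7

variable {A : Type*} [Ring A] {m : ℕ}

theorem outer_expand (b : A) (Y : Fin m → A) :
    ∑ τ : Perm (Fin (m + 1)),
        (sign τ : ℤ) • (List.ofFn fun i => (Fin.cons b Y : Fin (m + 1) → A) (τ i)).prod
      = ∑ k : Fin (m + 1), ∑ μ : Perm (Fin m),
          ((-1) ^ k.1 * (sign μ : ℤ)) •
            ((List.ofFn fun t : Fin k.1 =>
                Y (μ ⟨t.1, by have := t.isLt; have := k.isLt; omega⟩)).prod * b *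
              (List.ofFn fun t : Fin (m - k.1) =>
                Y (μ ⟨k.1 + t.1, by have := t.isLt; omega⟩)).prod) := by
  calc ∑ τ : Perm (Fin (m + 1)),
        (sign τ : ℤ) • (List.ofFn fun i => (Fin.cons b Y : Fin (m + 1) → A) (τ i)).prod
      = ∑ km : Fin (m + 1) × Perm (Fin m),
          (sign (outerIndex km) : ℤ) •
            (List.ofFn fun i => (Fin.cons b Y : Fin (m + 1) → A) (outerIndex km i)).prod :=
        (Fintype.sum_equiv (Equiv.ofBijective outerIndex outerIndex_bijective) _ _
          (fun km => rfl)).symm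
    _ = ∑ k : Fin (m + 1), ∑ μ : Perm (Fin m),
          (sign (outerIndex (k, μ)) : ℤ) •
            (List.ofFn fun i => (Fin.cons b Y : Fin (m + 1) → A) (outerIndex (k, μ) i)).prod :=
        Fintype.sum_prod_type _
    _ = _ := ?_
  refine Finset.sum_congr rfl fun k _ => Finset.sum_congr rfl fun μ _ => ?_
  rw [sign_outerIndex]
  congr 1
  have hfun : ∀ i : Fin (m + 1),
      (Fin.cons b Y : Fin (m + 1) → A) (outerIndex (k, μ) i)
        = (Fin.cons b (Y ∘ μ) : Fin (m + 1) → A) (Fin.cycleRange k i) := by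
    intro i
    rw [outerIndex, Equiv.Perm.mul_apply, cons_liftPerm]
  simp only [hfun]
  rw [prod_cons_cycleRange]
  simp only [Function.comp_apply]

theorem inner_expand (X : Fin (2 * m + 1) → A) (σ : Perm (Fin (2 * m + 1))) :
    mbracket (Fin.cons (mbracket fun j : Fin (m + 1) => X (σ (Fin.castLE (by linarith) j)))
        (fun j : Fin m => X (σ ⟨m + 1 + j.1, by have := j.isLt; linarith⟩)))
      = ∑ k : Fin (m + 1), ∑ μ : Perm (Fin m), ∑ ρ : Perm (Fin (m + 1)),
          ((-1) ^ k.1 * (sign μ : ℤ) * (sign ρ : ℤ)) •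
            (List.ofFn fun t : Fin (2 * m + 1) => X ((σ * qperm ρ μ * cperm k) t)).prod := by
  rw [mbracket]
  rw [outer_expand]
  refine Finset.sum_congr rfl fun k _ => Finset.sum_congr rfl fun μ _ => ?_
  rw [mbracket]
  rw [Finset.mul_sum, Finset.sum_mul, Finset.smul_sum]
  refine Finset.sum_congr rfl fun ρ _ => ?_
  rw [mul_smul_comm, smul_mul_assoc, smul_smul]
  rw [word_recombine X σ k μ ρ (by linarith)]

end MJ8

namespace MJ9
open MJ MJ2 MJ3 MJ4 MJ5 MJ6 MJ7 MJ8

theorem main' {A : Type*} [Ring A] (m : ℕ) (hn : Even (m + 1)) (X : Fin (2 * m + 1) → A) :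
    ∑ σ : Equiv.Perm (Fin (2 * m + 1)), (Equiv.Perm.sign σ : ℤ) •
        mbracket (Fin.cons
          (mbracket fun j : Fin (m + 1) => X (σ (Fin.castLE (by linarith) j)))
          (fun j : Fin m => X (σ ⟨m + 1 + j.1, by have := j.isLt; linarith⟩))) = 0 := by
  classical
  have hcoef : ∀ (k : Fin (m + 1)) (μ : Perm (Fin m)) (ρ : Perm (Fin (m + 1)))
      (σ : Perm (Fin (2 * m + 1))),
      ((sign σ : ℤ) * ((-1) ^ k.1 * (sign μ : ℤ) * (sign ρ : ℤ)))
        = ((-1 : ℤ) ^ k.1) * (sign (σ * qperm ρ μ * cperm k) : ℤ) := by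
    intro k μ ρ σ
    rw [map_mul, map_mul, sign_qperm, sign_cperm hn]
    simp only [Units.val_mul, mul_one]
    ring
  calc ∑ σ : Equiv.Perm (Fin (2 * m + 1)), (Equiv.Perm.sign σ : ℤ) •
        mbracket (Fin.cons
          (mbracket fun j : Fin (m + 1) => X (σ (Fin.castLE (by linarith) j)))
          (fun j : Fin m => X (σ ⟨m + 1 + j.1, by have := j.isLt; linarith⟩)))
      = ∑ σ : Perm (Fin (2 * m + 1)), ∑ k : Fin (m + 1), ∑ μ : Perm (Fin m),
          ∑ ρ : Perm (Fin (m + 1)),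
            ((sign σ : ℤ) * ((-1) ^ k.1 * (sign μ : ℤ) * (sign ρ : ℤ))) •
              (List.ofFn fun t : Fin (2 * m + 1) => X ((σ * qperm ρ μ * cperm k) t)).prod := by
        refine Finset.sum_congr rfl fun σ _ => ?_
        rw [inner_expand, Finset.smul_sum]
        refine Finset.sum_congr rfl fun k _ => ?_
        rw [Finset.smul_sum]
        refine Finset.sum_congr rfl fun μ _ => ?_
        rw [Finset.smul_sum]
        refine Finset.sum_congr rfl fun ρ _ => ?_
        rw [smul_smul]
    _ = ∑ k : Fin (m + 1), ∑ μ : Perm (Fin m), ∑ ρ : Perm (Fin (m + 1)),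
          ∑ σ : Perm (Fin (2 * m + 1)),
            ((sign σ : ℤ) * ((-1) ^ k.1 * (sign μ : ℤ) * (sign ρ : ℤ))) •
              (List.ofFn fun t : Fin (2 * m + 1) => X ((σ * qperm ρ μ * cperm k) t)).prod := by
        rw [Finset.sum_comm]
        refine Finset.sum_congr rfl fun k _ => ?_
        rw [Finset.sum_comm]
        refine Finset.sum_congr rfl fun μ _ => ?_
        rw [Finset.sum_comm]
    _ = ∑ k : Fin (m + 1), ∑ _μ : Perm (Fin m), ∑ _ρ : Perm (Fin (m + 1)),
          ((-1 : ℤ) ^ k.1) • ∑ u : Perm (Fin (2 * m + 1)),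
            (sign u : ℤ) • (List.ofFn fun t : Fin (2 * m + 1) => X (u t)).prod := by
        refine Finset.sum_congr rfl fun k _ => Finset.sum_congr rfl fun μ _ =>
          Finset.sum_congr rfl fun ρ _ => ?_
        have hbij : Function.Bijective
            (fun σ : Perm (Fin (2 * m + 1)) => σ * qperm ρ μ * cperm k) := by
          have heq : (fun σ : Perm (Fin (2 * m + 1)) => σ * qperm ρ μ * cperm k)
              = (fun σ => σ * (qperm ρ μ * cperm k)) := by
            funext σ; rw [mul_assoc]
          rw [heq]
          exact Group.mulRight_bijective _
        calc ∑ σ : Perm (Fin (2 * m + 1)),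
              ((sign σ : ℤ) * ((-1) ^ k.1 * (sign μ : ℤ) * (sign ρ : ℤ))) •
                (List.ofFn fun t : Fin (2 * m + 1) => X ((σ * qperm ρ μ * cperm k) t)).prod
            = ∑ σ : Perm (Fin (2 * m + 1)), ((-1 : ℤ) ^ k.1) •
                ((sign (σ * qperm ρ μ * cperm k) : ℤ) •
                  (List.ofFn fun t : Fin (2 * m + 1) =>
                    X ((σ * qperm ρ μ * cperm k) t)).prod) := by
              refine Finset.sum_congr rfl fun σ _ => ?_
              rw [hcoef k μ ρ σ, mul_smul]
          _ = ((-1 : ℤ) ^ k.1) • ∑ σ : Perm (Fin (2 * m + 1)),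
                ((sign (σ * qperm ρ μ * cperm k) : ℤ) •
                  (List.ofFn fun t : Fin (2 * m + 1) =>
                    X ((σ * qperm ρ μ * cperm k) t)).prod) := (Finset.smul_sum).symm
          _ = ((-1 : ℤ) ^ k.1) • ∑ u : Perm (Fin (2 * m + 1)),
                (sign u : ℤ) • (List.ofFn fun t : Fin (2 * m + 1) => X (u t)).prod := by
              congr 1
              exact Fintype.sum_bijective _ hbij _ _ (fun σ => rfl)
    _ = 0 := by
        have hz : (∑ k : Fin (m + 1), ((-1 : ℤ)) ^ (k.1)) = 0 := by
          rw [Fin.sum_univ_eq_sum_range (fun i => ((-1 : ℤ)) ^ i) (m + 1), neg_one_geom_sum,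
            if_pos hn]
        calc ∑ k : Fin (m + 1), ∑ _μ : Perm (Fin m), ∑ _ρ : Perm (Fin (m + 1)),
              ((-1 : ℤ) ^ k.1) • ∑ u : Perm (Fin (2 * m + 1)),
                (sign u : ℤ) • (List.ofFn fun t : Fin (2 * m + 1) => X (u t)).prod
            = ∑ k : Fin (m + 1),
                ((Fintype.card (Perm (Fin m)) * Fintype.card (Perm (Fin (m + 1)))) : ℕ) •
                (((-1 : ℤ) ^ k.1) • ∑ u : Perm (Fin (2 * m + 1)),
                  (sign u : ℤ) • (List.ofFn fun t : Fin (2 * m + 1) => X (u t)).prod) := by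
              refine Finset.sum_congr rfl fun k _ => ?_
              rw [Finset.sum_const, Finset.sum_const, smul_smul, Finset.card_univ,
                Finset.card_univ]
          _ = ((Fintype.card (Perm (Fin m)) * Fintype.card (Perm (Fin (m + 1)))) : ℕ) •
              ∑ k : Fin (m + 1),
                (((-1 : ℤ) ^ k.1) • ∑ u : Perm (Fin (2 * m + 1)),
                  (sign u : ℤ) • (List.ofFn fun t : Fin (2 * m + 1) => X (u t)).prod) :=
              (Finset.smul_sum).symm
          _ = 0 := by
              rw [← Finset.sum_smul, hz, zero_smul, smul_zero]

end MJ9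

/-- with n = m+1 even: the antisymmetrized bracket satisfies the
generalized Jacobi identity. -/
theorem mbracket_generalized_jacobi_of_even {A : Type*} [Ring A] [Algebra ℚ A]
    (m : ℕ) (hn : Even (m + 1)) (X : Fin (2 * m + 1) → A) :
    ∑ σ : Equiv.Perm (Fin (2 * m + 1)), (Equiv.Perm.sign σ : ℤ) •
        mbracket (Fin.cons
          (mbracket fun j : Fin (m + 1) => X (σ (Fin.castLE (by omega) j)))
          (fun j : Fin m => X (σ ⟨m + 1 + j.1, by have := j.isLt; omega⟩))) = 0 := by
  exact MJ9.main' m hn X
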